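/- Let D ∈ Matrix (Fin m) (Fin n) ℝ and G ∈ Matrix (Fin q) (Fin n) ℝ. The following are equivalent: (i) ker D ⊆ ker G, i.e. for every h ∈ ℝ^n, D.mulVec h = 0 implies G.mulVec h = 0; (ii) there exists A ∈ Matrix (Fin q) (Fin m) ℝ with G = A · D; (iii) the range (column span) of Gᵀ is contained in the range of Dᵀ; (iv) there exists λ ≥ 0 such that λ·(Dᵀ·D) − Gᵀ·G is positive semidefinite. -/

import Mathlib

open Matrix

private lemma quad_form {a b : ℕ} (M : Matrix (Fin a) (Fin b) ℝ) (x : Fin b → ℝ) :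
    x ⬝ᵥ ((Mᵀ * M) *ᵥ x) = (M *ᵥ x) ⬝ᵥ (M *ᵥ x) := by
  rw [← Matrix.mulVec_mulVec, Matrix.dotProduct_mulVec, Matrix.vecMul_transpose]

private lemma frobenius_bound {a b : ℕ} (A : Matrix (Fin a) (Fin b) ℝ) (v : Fin b → ℝ) :
    (A *ᵥ v) ⬝ᵥ (A *ᵥ v) ≤ (∑ i, ∑ j, A i j ^ 2) * (v ⬝ᵥ v) := by
  have h1 : (A *ᵥ v) ⬝ᵥ (A *ᵥ v) = ∑ i, (∑ j, A i j * v j) ^ 2 := by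
    simp [dotProduct, Matrix.mulVec, sq]
  have h2 : v ⬝ᵥ v = ∑ j, v j ^ 2 := by simp [dotProduct, sq]
  rw [h1, h2, Finset.sum_mul]
  refine Finset.sum_le_sum fun i _ => ?_
  exact Finset.sum_mul_sq_le_sq_mul_sq _ _ _

/-- **Exact transfer equivalences.** For real matrices `D : m × n` and `G : q × n`,
the following are equivalent: (i) `ker D ⊆ ker G`; (ii) `G = A * D` for some `A`;
(iii) `range Gᵀ ⊆ range Dᵀ` (column spans); (iv) `Gᵀ G ⪯ λ Dᵀ D` for some `λ ≥ 0`. -/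
theorem exact_transfer_equivalences {m n q : ℕ}
    (D : Matrix (Fin m) (Fin n) ℝ) (G : Matrix (Fin q) (Fin n) ℝ) :
    List.TFAE
      [ ∀ h : Fin n → ℝ, D.mulVec h = 0 → G.mulVec h = 0,
        ∃ A : Matrix (Fin q) (Fin m) ℝ, G = A * D,
        LinearMap.range (Matrix.mulVecLin Gᵀ) ≤ LinearMap.range (Matrix.mulVecLin Dᵀ),
        ∃ lam : ℝ, 0 ≤ lam ∧ (lam • (Dᵀ * D) - Gᵀ * G).PosSemidef ] := by
  tfae_have 1 → 2 := by
    intro h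
    set Dl := Matrix.toLin' D with hDl
    set Gl := Matrix.toLin' G with hGl
    have hker : LinearMap.ker Dl ≤ LinearMap.ker Gl := by
      intro x hx
      simp only [LinearMap.mem_ker, hDl, hGl, Matrix.toLin'_apply] at *
      exact h x hx
    -- factor Gl through the quotient by ker Dl
    let g : ((Fin n → ℝ) ⧸ LinearMap.ker Dl) →ₗ[ℝ] (Fin q → ℝ) :=
      (LinearMap.ker Dl).liftQ Gl hker
    let Dbar : ((Fin n → ℝ) ⧸ LinearMap.ker Dl) →ₗ[ℝ] (Fin m → ℝ) :=
      (LinearMap.ker Dl).liftQ Dl le_rfl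
    have hDbar : LinearMap.ker Dbar = ⊥ :=
      Submodule.ker_liftQ_eq_bot _ _ le_rfl le_rfl
    obtain ⟨ℓ, hℓ⟩ := Dbar.exists_leftInverse_of_injective hDbar
    refine ⟨LinearMap.toMatrix' (g ∘ₗ ℓ), ?_⟩
    apply Matrix.toLin'.injective
    rw [Matrix.toLin'_mul, Matrix.toLin'_toMatrix']
    refine LinearMap.ext fun x => ?_
    have hx : Dbar ((LinearMap.ker Dl).mkQ x) = Dl x := rfl
    have : ℓ (Dl x) = (LinearMap.ker Dl).mkQ x := by
      rw [← hx]
      exact congrArg (fun f => f ((LinearMap.ker Dl).mkQ x)) hℓ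
    show Gl x = (g ∘ₗ ℓ) (Dl x)
    rw [LinearMap.comp_apply, this]
    rfl
  tfae_have 2 → 1 := by
    rintro ⟨A, rfl⟩ h hh
    rw [← Matrix.mulVec_mulVec, hh, Matrix.mulVec_zero]
  tfae_have 2 → 3 := by
    rintro ⟨A, rfl⟩ y ⟨x, rfl⟩
    refine ⟨Aᵀ *ᵥ x, ?_⟩
    rw [Matrix.mulVecLin_apply, Matrix.mulVecLin_apply, Matrix.transpose_mul,
      Matrix.mulVec_mulVec]
  tfae_have 3 → 2 := by
    intro h
    have hcol : ∀ i : Fin q, ∃ x : Fin m → ℝ, Dᵀ *ᵥ x = Gᵀ *ᵥ Pi.single i 1 := by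
      intro i
      exact h ⟨Pi.single i 1, rfl⟩
    choose A hA using hcol
    refine ⟨Matrix.of A, ?_⟩
    ext i j
    have := congrFun (hA i) j
    simp only [Matrix.mulVec, dotProduct, Matrix.transpose_apply] at this
    have hr : ∑ x : Fin q, G x j * (Pi.single i 1 : Fin q → ℝ) x = G i j := by
      simp [Pi.single_apply]
    rw [hr] at this
    simp only [Matrix.mul_apply, Matrix.of_apply]
    rw [← this]
    exact Finset.sum_congr rfl fun k _ => mul_comm _ _
  tfae_have 2 → 4 := by
    rintro ⟨A, rfl⟩
    refine ⟨∑ i, ∑ j, A i j ^ 2, ?_, Matrix.posSemidef_iff_dotProduct_mulVec.mpr ⟨?_, ?_⟩⟩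
    · positivity
    · show _ᴴ = _
      ext i j
      simp only [Matrix.conjTranspose_apply, Matrix.sub_apply, Matrix.smul_apply,
        Matrix.mul_apply, Matrix.transpose_apply, star_trivial, smul_eq_mul]
      congr 1
      · congr 1
        exact Finset.sum_congr rfl fun k _ => mul_comm _ _
      · exact Finset.sum_congr rfl fun k _ => mul_comm _ _
    · intro x
      have hx : star x = x := by simp
      rw [hx, Matrix.sub_mulVec, dotProduct_sub, Matrix.smul_mulVec,
        dotProduct_smul, quad_form, quad_form, smul_eq_mul]
      rw [← Matrix.mulVec_mulVec]
      have := frobenius_bound A (D *ᵥ x)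
      linarith
  tfae_have 4 → 1 := by
    rintro ⟨lam, hlam, hPSD⟩ h hh
    have hPSD := hPSD.dotProduct_mulVec_nonneg
    have := hPSD h
    rw [star_trivial, Matrix.sub_mulVec, dotProduct_sub, Matrix.smul_mulVec,
      dotProduct_smul, quad_form, quad_form, hh] at this
    simp only [Matrix.mulVec_zero, dotProduct_zero, smul_zero, zero_sub,
      le_neg, neg_zero] at this
    have h0 : (G *ᵥ h) ⬝ᵥ (G *ᵥ h) = 0 :=
      le_antisymm (by linarith) (Finset.sum_nonneg fun i _ => mul_self_nonneg _)
    funext i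
    have hs : ∀ j ∈ Finset.univ, (0:ℝ) ≤ (G *ᵥ h) j * (G *ᵥ h) j :=
      fun j _ => mul_self_nonneg _
    have := (Finset.sum_eq_zero_iff_of_nonneg hs).mp h0 i (Finset.mem_univ i)
    have := mul_self_eq_zero.mp this
    simpa using this
  tfae_finish
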